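/- For the measurement M = {M₀ = √(1/4)·I, M₁ = √(1/2)·I, M₂ = √(1/4)·I} and M' = {M₀' = √(1/2)·I, M₁' = √(1/2)·I} on a qubit, the mutually recursive fixed-point semantics of Alice's procedure equals the superoperator (1/3)·H ∘ ρ ∘ H + (1/3)·(HX) ∘ ρ ∘ (XH). Concretely: if a₀ = 0 (as a superoperator), aₙ₊₁(ρ) = (1/4)·HρH + (1/2)·bₙ(ρ), and b₀ = 0, bₙ₊₁(ρ) = (1/2)·aₙ(ρ) + (1/2)·(HX)ρ(XH), then for every positive semidefinite ρ, aₙ(ρ) converges (monotonically in the Löwner order) to (1/3)·HρH + (1/3)·(HX)ρ(XH). -/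

import Mathlib

open Matrix BigOperators ComplexOrder Filter

noncomputable def rqmcCo : ℕ → ℝ × ℝ × ℝ × ℝ
  | 0 => (0, 0, 0, 0)
  | n+1 => ((rqmcCo n).2.2.1/2 + 1/4, (rqmcCo n).2.2.2/2,
            (rqmcCo n).1/2, (rqmcCo n).2.1/2 + 1/2)

lemma rqmcCo_mono (n : ℕ) :
    (rqmcCo n).1 ≤ (rqmcCo (n+1)).1 ∧ (rqmcCo n).2.1 ≤ (rqmcCo (n+1)).2.1 ∧
    (rqmcCo n).2.2.1 ≤ (rqmcCo (n+1)).2.2.1 ∧ (rqmcCo n).2.2.2 ≤ (rqmcCo (n+1)).2.2.2 := by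
  induction n with
  | zero => norm_num [rqmcCo]
  | succ n ih =>
    obtain ⟨h1, h2, h3, h4⟩ := ih
    simp only [rqmcCo] at h1 h2 h3 h4 ⊢
    refine ⟨?_, ?_, ?_, ?_⟩ <;> linarith

lemma rqmcCo_bound (n : ℕ) :
    |(rqmcCo n).1 - 1/3| ≤ (2/3) * (1/2)^n ∧ |(rqmcCo n).2.1 - 1/3| ≤ (2/3) * (1/2)^n ∧
    |(rqmcCo n).2.2.1 - 1/6| ≤ (2/3) * (1/2)^n ∧ |(rqmcCo n).2.2.2 - 2/3| ≤ (2/3) * (1/2)^n := by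
  induction n with
  | zero => simp [rqmcCo]; norm_num [abs_le]
  | succ n ih =>
    obtain ⟨h1, h2, h3, h4⟩ := ih
    have e1 : (rqmcCo (n+1)).1 - 1/3 = ((rqmcCo n).2.2.1 - 1/6) * (1/2) := by
      simp [rqmcCo]; ring
    have e2 : (rqmcCo (n+1)).2.1 - 1/3 = ((rqmcCo n).2.2.2 - 2/3) * (1/2) := by
      simp [rqmcCo]; ring
    have e3 : (rqmcCo (n+1)).2.2.1 - 1/6 = ((rqmcCo n).1 - 1/3) * (1/2) := by
      simp [rqmcCo]; ring
    have e4 : (rqmcCo (n+1)).2.2.2 - 2/3 = ((rqmcCo n).2.1 - 1/3) * (1/2) := by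
      simp [rqmcCo]; ring
    refine ⟨?_, ?_, ?_, ?_⟩ <;>
      [rw [e1]; rw [e2]; rw [e3]; rw [e4]] <;>
      rw [abs_mul, abs_of_pos (by norm_num : (0:ℝ) < 1/2), pow_succ] <;> nlinarith

lemma rqmc_psd_smul {M : Matrix (Fin 2) (Fin 2) ℂ} (hM : M.PosSemidef) {c : ℝ}
    (hc : 0 ≤ c) : ((c : ℂ) • M).PosSemidef := by
  constructor
  · unfold Matrix.IsHermitian
    rw [conjTranspose_smul, hM.1.eq, Complex.star_def, Complex.conj_ofReal]
  · intro x
    exact (hM.smul (Complex.zero_le_real.mpr hc)).2 x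

lemma rqmc_tendsto_of_bound {u : ℕ → ℝ} {l : ℝ}
    (h : ∀ n, |u n - l| ≤ (2/3) * (1/2)^n) :
    Tendsto (fun n => ((u n : ℝ) : ℂ)) atTop (nhds ((l : ℝ) : ℂ)) := by
  have hg : Tendsto (fun n : ℕ => (2/3 : ℝ) * (1/2)^n) atTop (nhds 0) := by
    simpa using (tendsto_pow_atTop_nhds_zero_of_lt_one (by norm_num)
      (by norm_num : (1/2 : ℝ) < 1)).const_mul (2/3 : ℝ)
  have h0 : Tendsto u atTop (nhds l) := by
    rw [← tendsto_sub_nhds_zero_iff, tendsto_zero_iff_abs_tendsto_zero]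
    exact squeeze_zero (fun n => abs_nonneg _) h hg
  exact (Complex.continuous_ofReal.tendsto l).comp h0

/-- The mutually recursive fixed-point semantics of Alice's procedure in the
recursive quantum Markov chain: with `a₀ = 0`, `aₙ₊₁(ρ) = (1/4)HρH + (1/2)bₙ(ρ)`,
`b₀ = 0`, `bₙ₊₁(ρ) = (1/2)aₙ(ρ) + (1/2)(HX)ρ(XH)`, for every positive
semidefinite `ρ` the sequence `aₙ(ρ)` increases monotonically in the Löwner
order and converges to `(1/3)HρH + (1/3)(HX)ρ(XH)`. -/
theorem rqmc_alice_fixed_point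
    (H X : Matrix (Fin 2) (Fin 2) ℂ)
    (hH : H = ((Real.sqrt 2 : ℝ) : ℂ)⁻¹ • !![1, 1; 1, -1])
    (hX : X = !![0, 1; 1, 0])
    (a b : ℕ → Matrix (Fin 2) (Fin 2) ℂ → Matrix (Fin 2) (Fin 2) ℂ)
    (ha0 : a 0 = fun _ => 0) (hb0 : b 0 = fun _ => 0)
    (haS : ∀ n ρ, a (n + 1) ρ = (1/4 : ℂ) • (H * ρ * H) + (1/2 : ℂ) • b n ρ)
    (hbS : ∀ n ρ, b (n + 1) ρ = (1/2 : ℂ) • a n ρ + (1/2 : ℂ) • (H * X * ρ * X * H)) :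
    ∀ ρ : Matrix (Fin 2) (Fin 2) ℂ, ρ.PosSemidef →
      (∀ n, (a (n + 1) ρ - a n ρ).PosSemidef) ∧
      Tendsto (fun n => a n ρ) atTop
        (nhds ((1/3 : ℂ) • (H * ρ * H) + (1/3 : ℂ) • (H * X * ρ * X * H))) := by
  intro ρ hρ
  have hHerm : Hᴴ = H := by
    rw [hH, conjTranspose_smul]
    congr 1
    · rw [star_inv₀, Complex.star_def, Complex.conj_ofReal]
    · ext i j; fin_cases i <;> fin_cases j <;> simp
  have hXHerm : Xᴴ = X := by
    rw [hX]; ext i j; fin_cases i <;> fin_cases j <;> simp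
  have hP : (H * ρ * H).PosSemidef := by
    have := hρ.mul_mul_conjTranspose_same H
    rwa [hHerm] at this
  have hQ : (H * X * ρ * X * H).PosSemidef := by
    have := hρ.mul_mul_conjTranspose_same (H * X)
    rw [conjTranspose_mul, hHerm, hXHerm] at this
    simpa [mul_assoc] using this
  have key : ∀ n, a n ρ = (((rqmcCo n).1 : ℝ) : ℂ) • (H * ρ * H)
        + (((rqmcCo n).2.1 : ℝ) : ℂ) • (H * X * ρ * X * H)
      ∧ b n ρ = (((rqmcCo n).2.2.1 : ℝ) : ℂ) • (H * ρ * H)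
        + (((rqmcCo n).2.2.2 : ℝ) : ℂ) • (H * X * ρ * X * H) := by
    intro n
    induction n with
    | zero => simp [ha0, hb0, rqmcCo]
    | succ n ih =>
      obtain ⟨ia, ib⟩ := ih
      constructor
      · rw [haS, ib]
        simp only [rqmcCo]
        push_cast
        module
      · rw [hbS, ia]
        simp only [rqmcCo]
        push_cast
        module
  constructor
  · intro n
    obtain ⟨h1, h2, -, -⟩ := rqmcCo_mono n
    have heq : a (n+1) ρ - a n ρ =
        ((((rqmcCo (n+1)).1 - (rqmcCo n).1 : ℝ)) : ℂ) • (H * ρ * H)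
        + ((((rqmcCo (n+1)).2.1 - (rqmcCo n).2.1 : ℝ)) : ℂ) • (H * X * ρ * X * H) := by
      rw [(key (n+1)).1, (key n).1]
      push_cast
      module
    rw [heq]
    exact (rqmc_psd_smul hP (by linarith)).add (rqmc_psd_smul hQ (by linarith))
  · have hc := rqmc_tendsto_of_bound (fun n => (rqmcCo_bound n).1)
    have hd := rqmc_tendsto_of_bound (fun n => (rqmcCo_bound n).2.1)
    have hlim := (hc.smul_const (H * ρ * H)).add (hd.smul_const (H * X * ρ * X * H))
    have h13 : (((1 : ℝ)/3 : ℝ) : ℂ) = (1/3 : ℂ) := by norm_num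
    rw [h13] at hlim
    exact hlim.congr fun n => ((key n).1).symm
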